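/- For any oriented graph G = (V, E), the commutativity rank satisfies η(G) ≤ min(|V|², |E|) · min(|V|, |E| + 1) + |E|. -/

import Mathlib

/-- An oriented graph: finite nonempty sets of vertices and edges with
origin and tail maps. -/
structure OrientedGraph where
  V : Type
  E : Type
  [fintypeV : Fintype V]
  [fintypeE : Fintype E]
  [nonemptyV : Nonempty V]
  [nonemptyE : Nonempty E]
  o : E → V
  t : E → V

attribute [instance] OrientedGraph.fintypeV OrientedGraph.fintypeE
  OrientedGraph.nonemptyV OrientedGraph.nonemptyE

namespace OrientedGraph

variable (G : OrientedGraph)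

/-- `G.IsPath p u v` : the edge sequence `p` is a path from `u` to `v`
(consecutive edges are composable; paths of length 0 at any vertex are allowed). -/
def IsPath (p : List G.E) (u v : G.V) : Prop :=
  List.Chain' (fun e f => G.t e = G.o f) p ∧
  ((p = [] ∧ u = v) ∨
    ∃ h : p ≠ [], u = G.o (p.head h) ∧ v = G.t (p.getLast h))

/-- The label of an edge sequence: the product of the labels of its edges
(the empty sequence maps to `1`). -/
def labelProd {M : Type} [Monoid M] (l : G.E → M) (s : List G.E) : M :=
  (s.map l).prod

/-- The diagram `(G, l)` is commutative: any two paths with the same origin and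
the same tail have equal labels. -/
def IsCommutative {M : Type} [Monoid M] (l : G.E → M) : Prop :=
  ∀ (u v : G.V) (p₁ p₂ : List G.E),
    G.IsPath p₁ u v → G.IsPath p₂ u v → G.labelProd l p₁ = G.labelProd l p₂

/-- A complete system of relations for `G`: for every monoid `M` and every
labeling `l : E → M`, the diagram `(G, l)` is commutative iff all relations hold. -/
def IsComplete (R : Finset (List G.E × List G.E)) : Prop :=
  ∀ (M : Type) [Monoid M], ∀ l : G.E → M,
    G.IsCommutative l ↔ ∀ r ∈ R, G.labelProd l r.1 = G.labelProd l r.2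

/-- A minimal complete system of relations: no proper subset is complete. -/
def IsMinimalComplete (R : Finset (List G.E × List G.E)) : Prop :=
  G.IsComplete R ∧ ∀ R' : Finset (List G.E × List G.E), R' ⊂ R → ¬ G.IsComplete R'

/-- The commutativity rank `η(G)`: the minimal cardinality of a complete
system of relations for `G`. -/
noncomputable def eta : ℕ :=
  sInf {n : ℕ | ∃ R : Finset (List G.E × List G.E), G.IsComplete R ∧ R.card = n}

/-- `S'` is obtained from `S` by one multiplication. -/
def MulStep (S S' : Set (List G.E)) : Prop :=
  ∃ s ∈ S, ∃ s' ∈ S, S' = S ∪ {s ++ s'}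

/-- `G.mCost S S'` : the minimal number of multiplications needed to obtain `S'`
from `S` (`⊤` if impossible). -/
noncomputable def mCost (S S' : Set (List G.E)) : ℕ∞ :=
  sInf {k : ℕ∞ | ∃ n : ℕ, k = n ∧ ∃ f : ℕ → Set (List G.E),
    f 0 = S ∧ f n = S' ∧ ∀ i < n, G.MulStep (f i) (f (i + 1))}

/-- `S_R`: the set of all edge sequences appearing in the relations of `R`. -/
def relSet (R : Finset (List G.E × List G.E)) : Set (List G.E) :=
  {s | ∃ r ∈ R, s = r.1 ∨ s = r.2}

/-- `ℰ`: the empty sequence together with all one-edge sequences. -/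
def baseSet : Set (List G.E) :=
  {s | s = [] ∨ ∃ e : G.E, s = [e]}

/-- `m(R)`: the minimal number of multiplications needed to build all sequences
appearing in `R`, starting from `ℰ`. -/
noncomputable def mRel (R : Finset (List G.E × List G.E)) : ℕ∞ :=
  sInf {k : ℕ∞ | ∃ S : Set (List G.E), G.relSet R ⊆ S ∧ k = G.mCost G.baseSet S}

/-- The multiplication rank `ν(G)`. -/
noncomputable def nu : ℕ∞ :=
  sInf {k : ℕ∞ | ∃ R : Finset (List G.E × List G.E), G.IsComplete R ∧ k = G.mRel R}

/-- A 4-tuple of edges `(a, b, c, d)` forms a rhomboid. -/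
def IsRhomboid (r : G.E × G.E × G.E × G.E) : Prop :=
  G.o r.1 = G.o r.2.2.1 ∧ G.t r.2.1 = G.t r.2.2.2 ∧
  G.t r.1 = G.o r.2.1 ∧ G.t r.2.2.1 = G.o r.2.2.2 ∧
  G.o r.1 ≠ G.t r.1 ∧ G.o r.1 ≠ G.o r.2.2.2 ∧ G.o r.1 ≠ G.t r.2.2.2 ∧
  G.t r.1 ≠ G.o r.2.2.2 ∧ G.t r.1 ≠ G.t r.2.2.2 ∧ G.o r.2.2.2 ≠ G.t r.2.2.2

/-- Two rhomboids `(a, b, c, d)` and `(a', b', c', d')` are disjoint. -/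
def RhDisjoint (r r' : G.E × G.E × G.E × G.E) : Prop :=
  (r.1 ≠ r'.1 ∨ r.2.1 ≠ r'.2.1) ∧
  (r.1 ≠ r'.2.2.1 ∨ r.2.1 ≠ r'.2.2.2) ∧
  (r.2.2.1 ≠ r'.2.2.1 ∨ r.2.2.2 ≠ r'.2.2.2) ∧
  (r.2.2.1 ≠ r'.1 ∨ r.2.2.2 ≠ r'.2.1)

/-- `𝔯𝔥(G)`: the maximal cardinality of a family of pairwise disjoint rhomboids in `G`. -/
noncomputable def rhNum : ℕ :=
  sSup {n : ℕ | ∃ F : Finset (G.E × G.E × G.E × G.E),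
    (∀ r ∈ F, G.IsRhomboid r) ∧
    (∀ r ∈ F, ∀ r' ∈ F, r ≠ r' → G.RhDisjoint r r') ∧ F.card = n}

/-- `𝔏(G)`: the number of loops of `G`. -/
noncomputable def loopCount : ℕ :=
  Nat.card {e : G.E // G.o e = G.t e}

/-- `G` is quasi-acyclic: no directed cycle visiting two or more distinct vertices. -/
def QuasiAcyclic : Prop :=
  ∀ u v : G.V, u ≠ v →
    ∀ p q : List G.E, G.IsPath p u v → G.IsPath q v u → False

/-- `G` is 2-path-bounded: every oriented path avoiding loop edges has length at most 2. -/
def TwoPathBounded : Prop :=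
  ∀ (p : List G.E) (u v : G.V), G.IsPath p u v →
    (∀ e ∈ p, G.o e ≠ G.t e) → p.length ≤ 2

/-- `G` has a pair of multiple edges. -/
def HasMultipleEdges : Prop :=
  ∃ e e' : G.E, e ≠ e' ∧ G.t e = G.t e' ∧ G.o e = G.o e' ∧ G.t e ≠ G.o e

/-- `G` has a triangle. -/
def HasTriangle : Prop :=
  ∃ a b c : G.E, G.o a = G.o b ∧ G.t b = G.o c ∧ G.t c = G.t a ∧
    G.o a ≠ G.t a ∧ G.o b ≠ G.t b ∧ G.o c ≠ G.t c

/-- `G` has no loops. -/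
def NoLoops : Prop := ∀ e : G.E, G.o e ≠ G.t e

/-- Every edge occurring on either side of the relation `r` is a loop. -/
def AllLoops (r : List G.E × List G.E) : Prop :=
  (∀ e ∈ r.1, G.o e = G.t e) ∧ (∀ e ∈ r.2, G.o e = G.t e)

/-- Both sides of the relation `r` contain at least one non-loop edge. -/
def BothSidesNonLoop (r : List G.E × List G.E) : Prop :=
  (∃ e ∈ r.1, G.o e ≠ G.t e) ∧ (∃ e ∈ r.2, G.o e ≠ G.t e)

end OrientedGraph

/-- The triploid `T(n₁, n₂, n₃, n₀, e)`. -/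
def Triploid (n₁ n₂ n₃ n₀ e : ℕ) (hn₁ : 0 < n₁) (he : n₂ * (n₁ + n₃) ≤ e)
    (he₀ : 0 < e) : OrientedGraph where
  V := Fin n₀ ⊕ Fin n₁ ⊕ Fin n₂ ⊕ Fin n₃
  E := (Fin n₁ × Fin n₂) ⊕ (Fin n₂ × Fin n₃) ⊕ Fin (e - n₂ * (n₁ + n₃))
  nonemptyV := ⟨Sum.inr (Sum.inl ⟨0, hn₁⟩)⟩
  nonemptyE := by
    by_cases h : n₂ * (n₁ + n₃) < e
    · exact ⟨Sum.inr (Sum.inr ⟨0, by omega⟩)⟩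
    · have h2 : 0 < n₂ := by
        rcases Nat.eq_zero_or_pos n₂ with h0 | h0
        · exfalso; subst h0; simp at h; omega
        · exact h0
      exact ⟨Sum.inl (⟨0, hn₁⟩, ⟨0, h2⟩)⟩
  o := Sum.elim (fun p => Sum.inr (Sum.inl p.1))
        (Sum.elim (fun p => Sum.inr (Sum.inr (Sum.inl p.1)))
          (fun _ => Sum.inr (Sum.inl ⟨0, hn₁⟩)))
  t := Sum.elim (fun p => Sum.inr (Sum.inr (Sum.inl p.2)))
        (Sum.elim (fun p => Sum.inr (Sum.inr (Sum.inr p.2)))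
          (fun _ => Sum.inr (Sum.inl ⟨0, hn₁⟩)))
namespace OrientedGraph
variable (G : OrientedGraph)

theorem isPath_nil {u v : G.V} : G.IsPath [] u v ↔ u = v := by
  constructor
  · rintro ⟨-, ⟨-, h⟩ | ⟨h, -⟩⟩
    · exact h
    · exact absurd rfl h
  · rintro rfl; exact ⟨List.isChain_nil, Or.inl ⟨rfl, rfl⟩⟩

theorem isPath_cons {e : G.E} {q : List G.E} {u v : G.V} :
    G.IsPath (e :: q) u v ↔ u = G.o e ∧ G.IsPath q (G.t e) v := by
  cases q with
  | nil =>
      simp [IsPath, eq_comm, List.Chain', List.isChain_singleton, List.isChain_nil]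
  | cons f q' =>
      simp only [IsPath, List.Chain', List.isChain_cons_cons]
      constructor
      · rintro ⟨⟨h1, h2⟩, ⟨h, -⟩ | ⟨h, hu, hv⟩⟩
        · exact absurd h (List.cons_ne_nil _ _)
        · exact ⟨hu, ⟨h2, Or.inr ⟨List.cons_ne_nil _ _, by simpa using h1,
            by simpa [List.getLast_cons] using hv⟩⟩⟩
      · rintro ⟨hu, h2, ⟨h, -⟩ | ⟨h, hu', hv⟩⟩
        · exact absurd h (List.cons_ne_nil _ _)
        · refine ⟨⟨by simpa using hu', h2⟩, Or.inr ⟨List.cons_ne_nil _ _, hu, by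
            simpa [List.getLast_cons] using hv⟩⟩

theorem isPath_append {p q : List G.E} {u w v : G.V} (hp : G.IsPath p u w)
    (hq : G.IsPath q w v) : G.IsPath (p ++ q) u v := by
  induction p generalizing u with
  | nil => rw [G.isPath_nil] at hp; subst hp; simpa using hq
  | cons e p' ih =>
      rw [G.isPath_cons] at hp
      exact (G.isPath_cons).2 ⟨hp.1, ih hp.2⟩

end OrientedGraph
namespace OrientedGraph
variable (G : OrientedGraph)

open Classical in
/-- A canonical path from `u` to `v` (empty if `u = v` or if none exists). -/
noncomputable def canon (u v : G.V) : List G.E :=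
  if h : ∃ p, G.IsPath p u v then (if u = v then [] else h.choose) else []

open Classical in
theorem canon_isPath {u v : G.V} (h : ∃ p, G.IsPath p u v) :
    G.IsPath (G.canon u v) u v := by
  rw [canon, dif_pos h]
  split
  · next heq => subst heq; exact G.isPath_nil.2 rfl
  · exact h.choose_spec

open Classical in
theorem canon_self (u : G.V) : G.canon u u = [] := by
  rw [canon, dif_pos ⟨[], G.isPath_nil.2 rfl⟩, if_pos rfl]

theorem labelProd_append {M : Type} [Monoid M] (l : G.E → M) (p q : List G.E) :
    G.labelProd l (p ++ q) = G.labelProd l p * G.labelProd l q := by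
  simp [labelProd]

open Classical in
theorem reach_card_le (w : G.V) :
    (Finset.univ.filter (fun v => ∃ p, G.IsPath p w v)).card ≤ Fintype.card G.E + 1 := by
  classical
  have hedge : ∀ v ∈ Finset.univ.filter (fun v => ∃ p, G.IsPath p w v), v ≠ w →
      ∃ e : G.E, G.t e = v := by
    intro v hv hne
    obtain ⟨p, hp⟩ := (Finset.mem_filter.1 hv).2
    rcases hp.2 with ⟨-, h⟩ | ⟨h, -, hv'⟩
    · exact absurd h.symm hne
    · exact ⟨p.getLast h, hv'.symm⟩
  rw [← Fintype.card_option, ← Finset.card_univ]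
  refine Finset.card_le_card_of_injOn
    (fun v => if h : ∃ e : G.E, G.t e = v then some h.choose else none)
    (fun _ _ => Finset.mem_univ _) ?_
  intro a ha b hb hab
  dsimp only at hab
  by_cases h1 : ∃ e : G.E, G.t e = a <;> by_cases h2 : ∃ e : G.E, G.t e = b
  · rw [dif_pos h1, dif_pos h2] at hab
    rw [← h1.choose_spec, ← h2.choose_spec]
    exact congrArg G.t (Option.some.inj hab)
  · rw [dif_pos h1, dif_neg h2] at hab; exact absurd hab (by simp)
  · rw [dif_neg h1, dif_pos h2] at hab; exact absurd hab (by simp)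
  · have ha' : a = w := by by_contra hne; exact h1 (hedge a ha hne)
    have hb' : b = w := by by_contra hne; exact h2 (hedge b hb hne)
    rw [ha', hb']

end OrientedGraph

/-- Theorem (upper bound on commutativity rank):
`η(G) ≤ min(|V|², |E|) · min(|V|, |E| + 1) + |E|`. -/
theorem eta_upper_bound (G : OrientedGraph) :
    G.eta ≤ min (Fintype.card G.V ^ 2) (Fintype.card G.E) *
      min (Fintype.card G.V) (Fintype.card G.E + 1) + Fintype.card G.E := by
  classical
  set m := min (Fintype.card G.V) (Fintype.card G.E + 1) with hm
  let D : Finset (G.V × G.V) := Finset.image (fun e => (G.o e, G.t e)) Finset.univ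
  let Rw : G.V → Finset G.V := fun w => Finset.univ.filter (fun v => ∃ p, G.IsPath p w v)
  let T : Finset ((G.V × G.V) × G.V) := D.biUnion (fun uw => {uw} ×ˢ Rw uw.2)
  let RA : Finset (List G.E × List G.E) :=
    Finset.image (fun e => ([e], G.canon (G.o e) (G.t e))) Finset.univ
  let RB : Finset (List G.E × List G.E) :=
    T.image (fun x => (G.canon x.1.1 x.1.2 ++ G.canon x.1.2 x.2, G.canon x.1.1 x.2))
  let R := RB ∪ RA
  have hcomplete : G.IsComplete R := by
    intro M _ l
    constructor
    · intro hcomm r hr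
      rcases Finset.mem_union.1 hr with hr | hr
      · rcases Finset.mem_image.1 hr with ⟨⟨⟨u, w⟩, v⟩, hx, rfl⟩
        rcases Finset.mem_biUnion.1 hx with ⟨uw, huw, hmem⟩
        rw [Finset.mem_product, Finset.mem_singleton] at hmem
        obtain ⟨h1, hv⟩ := hmem
        subst h1
        rcases Finset.mem_image.1 huw with ⟨e, -, he⟩
        have heo : G.o e = u := congrArg Prod.fst he
        have het : G.t e = w := congrArg Prod.snd he
        have hw : ∃ p, G.IsPath p u w :=
          ⟨[e], G.isPath_cons.2 ⟨heo.symm, het ▸ G.isPath_nil.2 rfl⟩⟩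
        have hv' : ∃ p, G.IsPath p w v := (Finset.mem_filter.1 hv).2
        have hcat : G.IsPath (G.canon u w ++ G.canon w v) u v :=
          G.isPath_append (G.canon_isPath hw) (G.canon_isPath hv')
        exact hcomm u v _ _ hcat (G.canon_isPath ⟨_, hcat⟩)
      · rcases Finset.mem_image.1 hr with ⟨e, -, rfl⟩
        have h1 : G.IsPath [e] (G.o e) (G.t e) := G.isPath_cons.2 ⟨rfl, G.isPath_nil.2 rfl⟩
        exact hcomm _ _ _ _ h1 (G.canon_isPath ⟨[e], h1⟩)
    · intro hrel
      have key : ∀ (p : List G.E) (u v : G.V), G.IsPath p u v →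
          G.labelProd l p = G.labelProd l (G.canon u v) := by
        intro p
        induction p with
        | nil =>
            intro u v hp
            rw [G.isPath_nil] at hp; subst hp; rw [G.canon_self]
        | cons e q ih =>
            intro u v hp
            rw [G.isPath_cons] at hp
            obtain ⟨rfl, hq⟩ := hp
            have hA : G.labelProd l [e] = G.labelProd l (G.canon (G.o e) (G.t e)) :=
              hrel _ (Finset.mem_union_right _
                (Finset.mem_image.2 ⟨e, Finset.mem_univ e, rfl⟩))
            have hB : G.labelProd l (G.canon (G.o e) (G.t e) ++ G.canon (G.t e) v)
                = G.labelProd l (G.canon (G.o e) v) := by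
              refine hrel _ (Finset.mem_union_left _
                (Finset.mem_image.2 ⟨⟨(G.o e, G.t e), v⟩, ?_, rfl⟩))
              refine Finset.mem_biUnion.2 ⟨(G.o e, G.t e),
                Finset.mem_image.2 ⟨e, Finset.mem_univ e, rfl⟩, ?_⟩
              rw [Finset.mem_product]
              exact ⟨Finset.mem_singleton_self _,
                Finset.mem_filter.2 ⟨Finset.mem_univ _, ⟨q, hq⟩⟩⟩
            calc G.labelProd l (e :: q) = G.labelProd l [e] * G.labelProd l q := by
                  simp [OrientedGraph.labelProd]
              _ = G.labelProd l (G.canon (G.o e) (G.t e)) *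
                    G.labelProd l (G.canon (G.t e) v) := by rw [hA, ih _ _ hq]
              _ = G.labelProd l (G.canon (G.o e) (G.t e) ++ G.canon (G.t e) v) :=
                  (G.labelProd_append l _ _).symm
              _ = G.labelProd l (G.canon (G.o e) v) := hB
      intro u v p₁ p₂ h1 h2
      rw [key p₁ u v h1, key p₂ u v h2]
  have hD : D.card ≤ min (Fintype.card G.V ^ 2) (Fintype.card G.E) := by
    refine le_min ?_ ?_
    · calc D.card ≤ (Finset.univ : Finset (G.V × G.V)).card := Finset.card_le_univ D
        _ = Fintype.card G.V ^ 2 := by rw [Finset.card_univ, Fintype.card_prod, sq]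
    · calc D.card ≤ (Finset.univ : Finset G.E).card := Finset.card_image_le
        _ = Fintype.card G.E := Finset.card_univ
  have hRw : ∀ w : G.V, (Rw w).card ≤ m := by
    intro w
    refine le_min ?_ (G.reach_card_le w)
    calc (Rw w).card ≤ (Finset.univ : Finset G.V).card := Finset.card_le_univ _
      _ = Fintype.card G.V := Finset.card_univ
  have hT : T.card ≤ min (Fintype.card G.V ^ 2) (Fintype.card G.E) * m := by
    calc T.card ≤ ∑ uw ∈ D, ({uw} ×ˢ Rw uw.2).card := Finset.card_biUnion_le
      _ ≤ ∑ _uw ∈ D, m := Finset.sum_le_sum (fun uw _ => by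
            rw [Finset.card_product, Finset.card_singleton, one_mul]; exact hRw uw.2)
      _ = D.card * m := by rw [Finset.sum_const, smul_eq_mul]
      _ ≤ min (Fintype.card G.V ^ 2) (Fintype.card G.E) * m :=
          Nat.mul_le_mul_right m hD
  have hRB : RB.card ≤ min (Fintype.card G.V ^ 2) (Fintype.card G.E) * m :=
    le_trans Finset.card_image_le hT
  have hRA : RA.card ≤ Fintype.card G.E :=
    le_trans Finset.card_image_le (le_of_eq Finset.card_univ)
  have hcard : R.card ≤ min (Fintype.card G.V ^ 2) (Fintype.card G.E) * m +
      Fintype.card G.E :=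
    le_trans (Finset.card_union_le _ _) (Nat.add_le_add hRB hRA)
  exact le_trans (Nat.sInf_le ⟨R, hcomplete, rfl⟩) hcard
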